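/- Let G be a Hermitian unitary, V = exp(-i(θ/2)G), Õ an operator commuting with G, and O an operator anticommuting with G. If θ has the two-component Gaussian mixture density ½N(x|-π/2,σ²)+½N(x|π/2,σ²), then E_θ[Tr[Õ V ρ V†] Tr[O V ρ V†]] = 0. -/

import Mathlib

open Matrix MeasureTheory Real

/-- Gaussian density with mean `μ` and variance `σ²`. -/
noncomputable def gaussDensity (σ μ x : ℝ) : ℝ :=
  (1 / (Real.sqrt (2 * Real.pi) * σ)) * Real.exp (-(x - μ) ^ 2 / (2 * σ ^ 2))

/-- Two-component Gaussian mixture centered at `±π/2`, each with variance `σ²`. -/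
noncomputable def mixture2 (σ x : ℝ) : ℝ :=
  (1 / 2) * gaussDensity σ (-(Real.pi / 2)) x + (1 / 2) * gaussDensity σ (Real.pi / 2) x

/-- The rotation `V = exp(-i(θ/2)G) = cos(θ/2)·I - i sin(θ/2)·G` generated by a
Hermitian unitary `G`. -/
noncomputable def rotGate {n : ℕ} (G : Matrix (Fin n) (Fin n) ℂ) (θ : ℝ) :
    Matrix (Fin n) (Fin n) ℂ :=
  (Complex.cos ((θ : ℂ) / 2)) • (1 : Matrix (Fin n) (Fin n) ℂ)
    - (Complex.I * Complex.sin ((θ : ℂ) / 2)) • G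

lemma rotGate_eq {n : ℕ} (G : Matrix (Fin n) (Fin n) ℂ) (θ : ℝ) :
    rotGate G θ = ((Real.cos (θ/2) : ℂ)) • (1 : Matrix (Fin n) (Fin n) ℂ)
      - (Complex.I * (Real.sin (θ/2) : ℂ)) • G := by
  unfold rotGate
  push_cast
  rfl

lemma rotGate_conjT {n : ℕ} (G : Matrix (Fin n) (Fin n) ℂ) (θ : ℝ) (hG : Gᴴ = G) :
    (rotGate G θ)ᴴ = ((Real.cos (θ/2) : ℂ)) • (1 : Matrix (Fin n) (Fin n) ℂ)
      + (Complex.I * (Real.sin (θ/2) : ℂ)) • G := by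
  rw [rotGate_eq]
  rw [Matrix.conjTranspose_sub, Matrix.conjTranspose_smul, Matrix.conjTranspose_smul,
    Matrix.conjTranspose_one, hG, sub_eq_add_neg, ← neg_smul]
  congr 1
  · congr 1
    simp [Complex.star_def, ← Complex.cos_conj, map_div₀, Complex.conj_ofReal, map_ofNat]
  · congr 1
    simp only [Complex.star_def, RingHom.map_mul, Complex.conj_I, ← Complex.sin_conj,
      map_div₀, Complex.conj_ofReal, map_ofNat]
    ring

lemma trace_comm_gate {n : ℕ} (G Otil ρ : Matrix (Fin n) (Fin n) ℂ) (θ : ℝ)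
    (hGherm : Gᴴ = G) (hGunit : G * G = 1) (hcomm : Otil * G = G * Otil) :
    (Otil * rotGate G θ * ρ * (rotGate G θ)ᴴ).trace = (Otil * ρ).trace := by
  have tA : (Otil * G * ρ * G).trace = (Otil * ρ).trace := by
    rw [Matrix.trace_mul_comm (Otil * G * ρ) G]
    rw [show G * (Otil * G * ρ) = (G * Otil) * (G * ρ) by noncomm_ring,
      ← hcomm, show (Otil * G) * (G * ρ) = Otil * (G * G) * ρ by noncomm_ring,
      hGunit, mul_one]
  have tB : (Otil * ρ * G).trace = (Otil * G * ρ).trace := by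
    rw [Matrix.trace_mul_comm (Otil * ρ) G, ← mul_assoc, ← hcomm]
  rw [rotGate_conjT G θ hGherm, rotGate_eq]
  simp only [Matrix.mul_sub, Matrix.sub_mul, Matrix.mul_add, Matrix.add_mul,
    Matrix.mul_smul, Matrix.smul_mul, Matrix.mul_one, Matrix.one_mul,
    Matrix.trace_sub, Matrix.trace_add, Matrix.trace_smul, smul_smul, smul_eq_mul]
  have h1 : ((Real.cos (θ/2) : ℂ))^2 + ((Real.sin (θ/2) : ℂ))^2 = 1 := by
    rw [← Complex.ofReal_pow, ← Complex.ofReal_pow, ← Complex.ofReal_add]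
    norm_cast
    rw [add_comm]; exact Real.sin_sq_add_cos_sq _
  rw [tA, tB]
  linear_combination ((Otil * ρ).trace) * h1 - ((Otil * ρ).trace * (Real.sin (θ/2):ℂ)^2) * Complex.I_sq

lemma trace_anti_gate {n : ℕ} (G O ρ : Matrix (Fin n) (Fin n) ℂ) (θ : ℝ)
    (hGherm : Gᴴ = G) (hGunit : G * G = 1) (hanti : O * G + G * O = 0) :
    (O * rotGate G θ * ρ * (rotGate G θ)ᴴ).trace
      = (Real.cos θ : ℂ) * (O * ρ).trace
        - Complex.I * (Real.sin θ : ℂ) * (O * G * ρ).trace := by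
  have hOG : G * O = -(O * G) := eq_neg_of_add_eq_zero_right hanti
  have tC : (O * G * ρ * G).trace = -(O * ρ).trace := by
    rw [Matrix.trace_mul_comm (O * G * ρ) G,
      show G * (O * G * ρ) = (G * O) * (G * ρ) by noncomm_ring, hOG,
      show -(O * G) * (G * ρ) = -(O * (G * G) * ρ) by noncomm_ring, hGunit, mul_one,
      Matrix.trace_neg]
  have tD : (O * ρ * G).trace = -(O * G * ρ).trace := by
    rw [Matrix.trace_mul_comm (O * ρ) G, ← mul_assoc, hOG, Matrix.neg_mul, Matrix.trace_neg]
  rw [rotGate_conjT G θ hGherm, rotGate_eq]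
  simp only [Matrix.mul_sub, Matrix.sub_mul, Matrix.mul_add, Matrix.add_mul,
    Matrix.mul_smul, Matrix.smul_mul, Matrix.mul_one, Matrix.one_mul,
    Matrix.trace_sub, Matrix.trace_add, Matrix.trace_smul, smul_smul, smul_eq_mul]
  rw [tC, tD]
  have hc : (Real.cos θ : ℂ) = (Real.cos (θ/2) : ℂ)^2 - (Real.sin (θ/2) : ℂ)^2 := by
    rw [show θ = 2 * (θ/2) by ring, Real.cos_two_mul']
    push_cast
    ring_nf
  have hs : (Real.sin θ : ℂ) = 2 * (Real.sin (θ/2) : ℂ) * (Real.cos (θ/2) : ℂ) := by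
    rw [show θ = 2 * (θ/2) by ring, Real.sin_two_mul]
    push_cast
    ring_nf
  rw [hc, hs]
  linear_combination (Complex.I_sq) * ((O*ρ).trace * (Real.sin (θ/2):ℂ)^2)

lemma odd_int (f : ℝ → ℝ) (h : ∀ x, f (-x) = -f x) : ∫ x, f x = 0 := by
  have h1 : ∫ x : ℝ, f (-x) = ∫ x : ℝ, f x := integral_neg_eq_self f volume
  simp_rw [h, integral_neg] at h1
  linarith

lemma int_gauss_cos_pos (σ : ℝ) : ∫ x, gaussDensity σ (Real.pi/2) x * Real.cos x = 0 := by
  rw [← MeasureTheory.integral_add_right_eq_self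
    (fun x => gaussDensity σ (Real.pi/2) x * Real.cos x) (Real.pi/2)]
  apply odd_int
  intro x
  simp only [gaussDensity, Real.cos_add_pi_div_two, Real.sin_neg]
  ring_nf

lemma int_gauss_cos_neg (σ : ℝ) : ∫ x, gaussDensity σ (-(Real.pi/2)) x * Real.cos x = 0 := by
  rw [← MeasureTheory.integral_add_right_eq_self
    (fun x => gaussDensity σ (-(Real.pi/2)) x * Real.cos x) (-(Real.pi/2))]
  apply odd_int
  intro x
  simp only [gaussDensity]
  rw [show (-x + -(Real.pi/2) : ℝ) = -(x + Real.pi/2) by ring, Real.cos_neg,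
    show (x + -(Real.pi/2) : ℝ) = -(Real.pi/2 - x) by ring, Real.cos_neg,
    Real.cos_pi_div_two_sub, Real.cos_add_pi_div_two]
  ring_nf

lemma int_mixture_sin (σ : ℝ) : ∫ x, mixture2 σ x * Real.sin x = 0 := by
  apply odd_int
  intro x
  simp only [mixture2, gaussDensity]
  rw [Real.sin_neg]
  ring_nf

lemma gauss_integrable (σ μ : ℝ) (hσ : 0 < σ) : Integrable (gaussDensity σ μ) := by
  have h := (integrable_exp_neg_mul_sq (show (0:ℝ) < 1/(2*σ^2) by positivity)).comp_sub_right μ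
  have e : (fun x : ℝ => Real.exp (-(x - μ)^2 / (2*σ^2)))
      = fun x => Real.exp (-(1/(2*σ^2)) * (x - μ)^2) := by
    funext x; congr 1; field_simp
  unfold gaussDensity
  exact (h.const_mul (1 / (Real.sqrt (2 * Real.pi) * σ))).congr
    (Filter.Eventually.of_forall fun x => by simp only; congr 1; congr 1; field_simp)

lemma mixture2_integrable (σ : ℝ) (hσ : 0 < σ) : Integrable (mixture2 σ) := by
  unfold mixture2
  exact ((gauss_integrable σ _ hσ).const_mul _).add ((gauss_integrable σ _ hσ).const_mul _)

lemma integrable_mul_cos {f : ℝ → ℝ} (hf : Integrable f) :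
    Integrable (fun x => f x * Real.cos x) := by
  have := hf.bdd_mul (Real.continuous_cos.aestronglyMeasurable)
    (c := 1) (Filter.Eventually.of_forall fun x => by simpa using Real.abs_cos_le_one x)
  simpa [mul_comm] using this

lemma integrable_mul_sin {f : ℝ → ℝ} (hf : Integrable f) :
    Integrable (fun x => f x * Real.sin x) := by
  have := hf.bdd_mul (Real.continuous_sin.aestronglyMeasurable)
    (c := 1) (Filter.Eventually.of_forall fun x => by simpa using Real.abs_sin_le_one x)
  simpa [mul_comm] using this

lemma int_mixture_cos (σ : ℝ) (hσ : 0 < σ) : ∫ x, mixture2 σ x * Real.cos x = 0 := by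
  have e : (fun x => mixture2 σ x * Real.cos x)
      = fun x => (1/2) * (gaussDensity σ (-(Real.pi/2)) x * Real.cos x)
        + (1/2) * (gaussDensity σ (Real.pi/2) x * Real.cos x) := by
    funext x; simp only [mixture2]; ring
  rw [e, integral_add ((integrable_mul_cos (gauss_integrable σ _ hσ)).const_mul _)
      ((integrable_mul_cos (gauss_integrable σ _ hσ)).const_mul _),
    integral_const_mul, integral_const_mul, int_gauss_cos_neg, int_gauss_cos_pos]
  norm_num

theorem mixture2_expectation_trace_cross {n : ℕ} (σ : ℝ) (hσ : 0 < σ)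
    (G Otil O ρ : Matrix (Fin n) (Fin n) ℂ)
    (hGherm : Gᴴ = G) (hGunit : G * G = 1)
    (hcomm : Otil * G = G * Otil) (hanti : O * G + G * O = 0) :
    ∫ θ : ℝ, (mixture2 σ θ : ℂ)
        * ((Otil * rotGate G θ * ρ * (rotGate G θ)ᴴ).trace
            * (O * rotGate G θ * ρ * (rotGate G θ)ᴴ).trace)
      = 0 := by
  have key : ∀ θ : ℝ, (mixture2 σ θ : ℂ)
        * ((Otil * rotGate G θ * ρ * (rotGate G θ)ᴴ).trace
            * (O * rotGate G θ * ρ * (rotGate G θ)ᴴ).trace)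
      = (mixture2 σ θ * Real.cos θ) • ((Otil * ρ).trace * (O * ρ).trace)
        + (mixture2 σ θ * Real.sin θ)
            • ((Otil * ρ).trace * (-(Complex.I * (O * G * ρ).trace))) := by
    intro θ
    rw [trace_comm_gate G Otil ρ θ hGherm hGunit hcomm,
        trace_anti_gate G O ρ θ hGherm hGunit hanti]
    simp only [Complex.real_smul]
    push_cast
    ring
  simp_rw [key]
  rw [integral_add ((integrable_mul_cos (mixture2_integrable σ hσ)).smul_const _)
      ((integrable_mul_sin (mixture2_integrable σ hσ)).smul_const _),
    integral_smul_const, integral_smul_const, int_mixture_cos σ hσ, int_mixture_sin σ]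
  simp
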